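/- Let p be a design on N units with π_i = 1/2 for all i. Then Var(τ̂) = ψ(c), where c = (c_1,…,c_N) with c_i = (Y_i(0) + Y_i(1))/2. Moreover, the function ψ : ℝ^N → ℝ is convex. -/

import Mathlib

open Finset

noncomputable section

/-- Propensity score `π_i = Pr(W_i = 1)` of a design `p` on `N` units. -/
def piS (N : ℕ) (p : (Fin N → Bool) → ℝ) (i : Fin N) : ℝ :=
  ∑ w : Fin N → Bool, if w i then p w else 0

/-- Expectation under the design. -/
def expct (N : ℕ) (p f : (Fin N → Bool) → ℝ) : ℝ :=
  ∑ w : Fin N → Bool, p w * f w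

/-- Average treatment effect. -/
def tauATE (N : ℕ) (Y1 Y0 : Fin N → ℝ) : ℝ :=
  (1 / (N : ℝ)) * ∑ i, (Y1 i - Y0 i)

/-- Observed outcome of unit `i` under assignment `w`. -/
def yObs (N : ℕ) (Y1 Y0 : Fin N → ℝ) (w : Fin N → Bool) (i : Fin N) : ℝ :=
  if w i then Y1 i else Y0 i

/-- The HT (difference-in-means) estimator when `π_i = 1/2`. -/
def tauDM (N : ℕ) (Y1 Y0 : Fin N → ℝ) (w : Fin N → Bool) : ℝ :=
  (2 / (N : ℝ)) * ((∑ i, if w i then yObs N Y1 Y0 w i else 0)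
    - ∑ i, if w i then 0 else yObs N Y1 Y0 w i)

/-- Design-based variance of `τ̂`. -/
def varDM (N : ℕ) (p : (Fin N → Bool) → ℝ) (Y1 Y0 : Fin N → ℝ) : ℝ :=
  expct N p (fun w => (tauDM N Y1 Y0 w - tauATE N Y1 Y0) ^ 2)

/-- `ψ(x) = Σ_w p_w·((2/N)·(Σ_{w_i=1} x_i − Σ_{w_i=0} x_i))²`. -/
def psiHalf (N : ℕ) (p : (Fin N → Bool) → ℝ) (x : Fin N → ℝ) : ℝ :=
  ∑ w : Fin N → Bool, p w *
    ((2 / (N : ℝ)) * ((∑ i, if w i then x i else 0) - ∑ i, if w i then 0 else x i)) ^ 2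

/-- Sum of convex functions is convex. -/
lemma convexOn_sum_aux {ι E : Type*} [Fintype ι] [AddCommMonoid E] [Module ℝ E]
    {s : Set E} (hs : Convex ℝ s) (f : ι → E → ℝ) (hf : ∀ i, ConvexOn ℝ s (f i)) :
    ConvexOn ℝ s (fun x => ∑ i, f i x) := by
  classical
  induction (Finset.univ : Finset ι) using Finset.induction with
  | empty => simpa using convexOn_const 0 hs
  | @insert a s h ih => simp only [Finset.sum_insert h]; exact (hf _).add ih

/-- The linear functional `x ↦ (2/N)·(Σ_{w_i=1} x_i − Σ_{w_i=0} x_i)`. -/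
def linW (N : ℕ) (w : Fin N → Bool) : (Fin N → ℝ) →ₗ[ℝ] ℝ :=
  (2 / (N : ℝ)) • ((∑ i, if w i then (LinearMap.proj i : (Fin N → ℝ) →ₗ[ℝ] ℝ) else 0)
    - ∑ i, if w i then 0 else (LinearMap.proj i : (Fin N → ℝ) →ₗ[ℝ] ℝ))

lemma linW_apply (N : ℕ) (w : Fin N → Bool) (x : Fin N → ℝ) :
    linW N w x = (2 / (N : ℝ)) *
      ((∑ i, if w i then x i else 0) - ∑ i, if w i then 0 else x i) := by
  simp [linW, LinearMap.sum_apply, apply_ite (fun (L : (Fin N → ℝ) →ₗ[ℝ] ℝ) => L x)]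

theorem variance_as_psi_and_convexity
    (N : ℕ) (p : (Fin N → Bool) → ℝ) (hp : ∀ w, 0 ≤ p w)
    (hsum : ∑ w : Fin N → Bool, p w = 1)
    (hpi : ∀ i, piS N p i = 1 / 2)
    (Y1 Y0 : Fin N → ℝ) :
    varDM N p Y1 Y0 = psiHalf N p (fun i => (Y0 i + Y1 i) / 2) ∧
      ConvexOn ℝ Set.univ (psiHalf N p) := by
  constructor
  · unfold varDM expct psiHalf
    refine Finset.sum_congr rfl fun w _ => ?_
    congr 1
    have h : tauDM N Y1 Y0 w - tauATE N Y1 Y0 = (2 / (N : ℝ)) *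
        ((∑ i, if w i then (Y0 i + Y1 i) / 2 else 0)
          - ∑ i, if w i then 0 else (Y0 i + Y1 i) / 2) := by
      unfold tauDM tauATE yObs
      rw [show (1 / (N : ℝ)) * ∑ i, (Y1 i - Y0 i)
          = (2 / (N : ℝ)) * ((1/2) * ∑ i, (Y1 i - Y0 i)) by ring, ← mul_sub]
      congr 1
      rw [Finset.mul_sum, ← Finset.sum_sub_distrib, ← Finset.sum_sub_distrib,
        ← Finset.sum_sub_distrib]
      refine Finset.sum_congr rfl fun i _ => ?_
      by_cases h : w i <;> simp [h] <;> ring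
    simp only [h]
  · have : psiHalf N p = fun x => ∑ w : Fin N → Bool, p w • (linW N w x) ^ 2 := by
      funext x
      unfold psiHalf
      refine Finset.sum_congr rfl fun w _ => ?_
      rw [linW_apply, smul_eq_mul]
    rw [this]
    refine convexOn_sum_aux convex_univ _ fun w => ConvexOn.smul (hp w) ?_
    have h2 : ConvexOn ℝ Set.univ (fun t : ℝ => t ^ 2) := Even.convexOn_pow even_two
    have := h2.comp_affineMap (linW N w).toAffineMap
    exact this
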